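/- The vector w = (2/(5τ+4))·(τ/2, τ², τ, 1), with τ = (1+√5)/2, satisfies Mᵀw = τ³w for M = [[1,2,2,2],[0,2,1,0],[1,2,1,1],[1,1,1,1]], and the entries of w sum to 1. -/

import Mathlib

theorem left_PF_eigenvector
    (τ : ℝ) (hτ : τ = (1 + Real.sqrt 5) / 2)
    (M : Matrix (Fin 4) (Fin 4) ℝ)
    (hM : M = !![1,2,2,2; 0,2,1,0; 1,2,1,1; 1,1,1,1])
    (w : Fin 4 → ℝ)
    (hw : w = fun i => (2 / (5 * τ + 4)) * (![τ / 2, τ ^ 2, τ, 1] i)) :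
    M.transpose.mulVec w = τ ^ 3 • w ∧ w 0 + w 1 + w 2 + w 3 = 1 := by
  have h5 : Real.sqrt 5 ^ 2 = 5 := Real.sq_sqrt (by norm_num)
  have hτ2 : τ ^ 2 = τ + 1 := by rw [hτ]; nlinarith [h5]
  have hpos : 5 * τ + 4 ≠ 0 := by
    rw [hτ]; nlinarith [Real.sqrt_nonneg 5]
  have hτ3 : τ ^ 3 = 2 * τ + 1 := by nlinarith [hτ2]
  have hτ4 : τ ^ 4 = 3 * τ + 2 := by nlinarith [hτ2, hτ3]
  have hτ5 : τ ^ 5 = 5 * τ + 3 := by nlinarith [hτ2, hτ3, hτ4]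
  subst hM hw
  constructor
  · funext i
    fin_cases i <;>
      simp [Matrix.mulVec, Matrix.transpose, dotProduct, Fin.sum_univ_succ] <;>
      field_simp <;> congr 1 <;> nlinarith [hτ2, hτ3, hτ4, hτ5]
  · simp only [Matrix.cons_val_zero, Matrix.cons_val_one, Matrix.cons_val_two, Matrix.cons_val_three, Matrix.head_cons, Matrix.tail_cons]
    field_simp
    nlinarith [hτ2, hτ3, hτ4, hτ5]
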